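/- For any integers N ≥ 2 and J ≥ 2, the matrix A of all two-by-two DID estimators has rank exactly (N−1)(J−1); equivalently, rank(Aᵀ) = rank(A) = (N−1)(J−1). -/
import Mathlib

open Matrix

/-- Quadruples (i,i',j,j') with i < i' and j < j'. -/
abbrev Quad (N J : ℕ) :=
  {q : (Fin N × Fin N) × (Fin J × Fin J) // q.1.1 < q.1.2 ∧ q.2.1 < q.2.2}

/-- The matrix of all two-by-two DID estimators: the row indexed by (i,i',j,j')
has +1 in columns (i,j') and (i',j), −1 in columns (i,j) and (i',j'), 0 elsewhere. -/
def Amat (N J : ℕ) : Matrix (Quad N J) (Fin N × Fin J) ℝ :=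
  Matrix.of fun q p =>
    (if p = (q.val.1.1, q.val.2.2) then (1 : ℝ) else 0)
      + (if p = (q.val.1.2, q.val.2.1) then 1 else 0)
      - (if p = (q.val.1.1, q.val.2.1) then 1 else 0)
      - (if p = (q.val.1.2, q.val.2.2) then 1 else 0)

lemma mulVec_Amat (N J : ℕ) (y : Fin N × Fin J → ℝ) (q : Quad N J) :
    (Amat N J).mulVec y q =
      y (q.val.1.1, q.val.2.2) + y (q.val.1.2, q.val.2.1)
        - y (q.val.1.1, q.val.2.1) - y (q.val.1.2, q.val.2.2) := by
  simp [Amat, Matrix.mulVec, dotProduct, add_mul, sub_mul, ite_mul,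
    Finset.sum_add_distrib, Finset.sum_sub_distrib]

/-- The additive-structure map. -/
def phiMap (N J : ℕ) : ((Fin N → ℝ) × (Fin J → ℝ)) →ₗ[ℝ] (Fin N × Fin J → ℝ) where
  toFun ab := fun p => ab.1 p.1 + ab.2 p.2
  map_add' := by intro a b; funext p; simp; ring
  map_smul' := by intro c a; funext p; simp [smul_eq_mul]; ring

def psiMap (N J : ℕ) : ℝ →ₗ[ℝ] ((Fin N → ℝ) × (Fin J → ℝ)) where
  toFun c := (fun _ => c, fun _ => -c)
  map_add' := by intro a b; refine Prod.ext ?_ ?_ <;> (funext x; simp; try ring)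
  map_smul' := by intro c a; refine Prod.ext ?_ ?_ <;> (funext x; simp; try ring)

/-- Lemma 2: For any N ≥ 2 and J ≥ 2, the matrix A of all two-by-two
DID estimators satisfies rank(Aᵀ) = rank(A) = (N−1)(J−1). -/
theorem rank_Amat
    (N J : ℕ) (hN : 2 ≤ N) (hJ : 2 ≤ J) :
    (Amat N J).rank = (N - 1) * (J - 1) ∧ ((Amat N J)ᵀ).rank = (N - 1) * (J - 1) := by
  obtain ⟨n, rfl⟩ : ∃ n, N = n + 2 := ⟨N - 2, by omega⟩
  obtain ⟨m, rfl⟩ : ∃ m, J = m + 2 := ⟨J - 2, by omega⟩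
  set N := n + 2
  set J := m + 2
  -- kernel of mulVecLin equals range of phiMap
  have hker : LinearMap.ker (Amat N J).mulVecLin = LinearMap.range (phiMap N J) := by
    ext y
    constructor
    · intro hy
      rw [LinearMap.mem_ker] at hy
      have hD : ∀ i : Fin N, ∀ j : Fin J, y (i, j) + y (0, 0) = y (i, 0) + y (0, j) := by
        intro i j
        by_cases hi : i = 0
        · subst hi; ring
        by_cases hj : j = 0
        · subst hj; ring
        have hi' : (0 : Fin N) < i := Fin.pos_of_ne_zero hi
        have hj' : (0 : Fin J) < j := Fin.pos_of_ne_zero hj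
        have h0 : (Amat N J).mulVec y ⟨((0, i), (0, j)), ⟨hi', hj'⟩⟩ = 0 := by
          rw [← Matrix.mulVecLin_apply, hy]; rfl
        rw [mulVec_Amat] at h0
        simp only at h0
        linarith
      refine ⟨(fun i => y (i, 0), fun j => y (0, j) - y (0, 0)), ?_⟩
      funext p
      have := hD p.1 p.2
      simp only [phiMap, LinearMap.coe_mk, AddHom.coe_mk]
      linarith
    · rintro ⟨⟨a, b⟩, rfl⟩
      rw [LinearMap.mem_ker]
      funext q
      rw [Matrix.mulVecLin_apply, mulVec_Amat]
      simp [phiMap]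
      ring
  -- kernel of phiMap equals range of psiMap
  have hkphi : LinearMap.ker (phiMap N J) = LinearMap.range (psiMap N J) := by
    ext ab
    constructor
    · intro h
      rw [LinearMap.mem_ker] at h
      have h' : ∀ i j, ab.1 i + ab.2 j = 0 := by
        intro i j
        have := congrFun h (i, j)
        simpa [phiMap] using this
      refine ⟨ab.1 0, ?_⟩
      have h1 : ∀ i, ab.1 i = ab.1 0 := by
        intro i
        have := h' i 0
        have := h' 0 0
        linarith [h' i 0, h' 0 0]
      have h2 : ∀ j, ab.2 j = -(ab.1 0) := by
        intro j
        linarith [h' 0 j]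
      simp only [psiMap, LinearMap.coe_mk, AddHom.coe_mk]
      refine Prod.ext ?_ ?_
      · funext i; exact (h1 i).symm
      · funext j; exact (h2 j).symm
    · rintro ⟨c, rfl⟩
      rw [LinearMap.mem_ker]
      funext p
      simp [phiMap, psiMap]
  have hpsi_inj : Function.Injective (psiMap N J) := by
    intro a b hab
    have := congrFun (congrArg Prod.fst hab) 0
    simpa [psiMap] using this
  -- finrank of ker phi = 1
  have hk1 : Module.finrank ℝ (LinearMap.ker (phiMap N J)) = 1 := by
    rw [hkphi, LinearMap.finrank_range_of_inj hpsi_inj, Module.finrank_self]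
  -- finrank of range phi = N + J - 1
  have hdom : Module.finrank ℝ ((Fin N → ℝ) × (Fin J → ℝ)) = N + J := by
    simp [Module.finrank_prod]
  have hrphi : Module.finrank ℝ (LinearMap.range (phiMap N J)) + 1 = N + J := by
    rw [← hk1, LinearMap.finrank_range_add_finrank_ker, hdom]
  -- rank-nullity for A
  have hdomA : Module.finrank ℝ (Fin N × Fin J → ℝ) = N * J := by
    simp [Module.finrank_fintype_fun_eq_card]
  have hRN : (Amat N J).rank + Module.finrank ℝ (LinearMap.range (phiMap N J)) = N * J := by
    rw [Matrix.rank, ← hker, LinearMap.finrank_range_add_finrank_ker, hdomA]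
  have hrphi' : Module.finrank ℝ (LinearMap.range (phiMap N J)) = n + m + 3 := by omega
  have hA : (Amat N J).rank = (N - 1) * (J - 1) := by
    have : (N - 1) * (J - 1) = (n + 1) * (m + 1) := by simp [N, J]
    rw [this]
    have hNJ : N * J = (n + 1) * (m + 1) + (n + m + 3) := by simp [N, J]; ring
    omega
  exact ⟨hA, by rw [Matrix.rank_transpose]; exact hA⟩
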